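/- arXiv:2209.08491 — 2 statements merged into one kernel-verified Lean document; each statement's English description precedes it below -/
import Mathlib

section
/- Let $U$ be a unitary on $\mathcal{H}_Q \otimes \mathcal{H}_F \otimes \mathcal{H}_N$ ($N$ a 'notepad') such that for each $q \in \{0,1\}$: $U(|q\rangle \otimes |r\rangle \otimes |\mathrm{blank}\rangle) = |q\rangle \otimes |f_q\rangle \otimes |n_q\rangle$. If the reversal $V = U^{-1}$ restricted to act only as the inverse on $Q \otimes F$ is to return $Q \otimes F$ to the product state $(\psi_0|0\rangle + \psi_1|1\rangle) \otimes |r\rangle$ for all $(\psi_0,\psi_1)$ with both amplitudes nonzero, while leaving $N$ in some fixed state, then necessarily $|n_0\rangle = |n_1\rangle$ (up to global phase). -/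
/-- Elementary tensor of a vector on `Fin 2 × F` (qubit plus friend) with a notepad
vector on `N`, realised in `EuclideanSpace ℂ ((Fin 2 × F) × N)`. -/
noncomputable def tpQFN {F N : Type*} [Fintype F] [Fintype N]
    (v : EuclideanSpace ℂ (Fin 2 × F)) (w : EuclideanSpace ℂ N) :
    EuclideanSpace ℂ ((Fin 2 × F) × N) :=
  WithLp.toLp 2 (fun p : (Fin 2 × F) × N => v p.1 * w p.2)

/-- Elementary tensor `|q⟩ ⊗ |f⟩` in `EuclideanSpace ℂ (Fin 2 × F)`. -/
noncomputable def tpQF' {F : Type*} [Fintype F]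
    (x : EuclideanSpace ℂ (Fin 2)) (y : EuclideanSpace ℂ F) :
    EuclideanSpace ℂ (Fin 2 × F) :=
  WithLp.toLp 2 (fun p : Fin 2 × F => x p.1 * y p.2)

/-- Computational basis states of a qubit. -/
noncomputable def qbv' (q : Fin 2) : EuclideanSpace ℂ (Fin 2) := EuclideanSpace.single q 1

/-- The action of `V' ⊗ I_N` on the full space, for a map `V'` on the `Q ⊗ F` factor. -/
noncomputable def actQF {F N : Type*} [Fintype F] [Fintype N]
    (V' : EuclideanSpace ℂ (Fin 2 × F) ≃ₗᵢ[ℂ] EuclideanSpace ℂ (Fin 2 × F))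
    (s : EuclideanSpace ℂ ((Fin 2 × F) × N)) :
    EuclideanSpace ℂ ((Fin 2 × F) × N) :=
  WithLp.toLp 2 (fun p : (Fin 2 × F) × N => V' (WithLp.toLp 2 (fun w => s (w, p.2))) p.1)

lemma actQF_tp {F N : Type*} [Fintype F] [Fintype N]
    (V' : EuclideanSpace ℂ (Fin 2 × F) ≃ₗᵢ[ℂ] EuclideanSpace ℂ (Fin 2 × F))
    (v : EuclideanSpace ℂ (Fin 2 × F)) (w : EuclideanSpace ℂ N) :
    actQF V' (tpQFN v w) = tpQFN (V' v) w := by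
  ext p
  have h : WithLp.toLp 2 (fun x => tpQFN v w (x, p.2)) = w p.2 • v := by
    ext x; simp [tpQFN, mul_comm]
  show V' (WithLp.toLp 2 (fun x => tpQFN v w (x, p.2))) p.1 = tpQFN (V' v) w p
  rw [h, map_smul]
  simp [tpQFN, mul_comm]

lemma actQF_lin {F N : Type*} [Fintype F] [Fintype N]
    (V' : EuclideanSpace ℂ (Fin 2 × F) ≃ₗᵢ[ℂ] EuclideanSpace ℂ (Fin 2 × F))
    (ψ₀ ψ₁ : ℂ) (a b : EuclideanSpace ℂ ((Fin 2 × F) × N)) :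
    actQF V' (ψ₀ • a + ψ₁ • b) = ψ₀ • actQF V' a + ψ₁ • actQF V' b := by
  ext p
  have h : WithLp.toLp 2 (fun w => (ψ₀ • a + ψ₁ • b) (w, p.2))
      = ψ₀ • (WithLp.toLp 2 (fun w => a (w, p.2)) : EuclideanSpace ℂ (Fin 2 × F))
        + ψ₁ • (WithLp.toLp 2 (fun w => b (w, p.2)) : EuclideanSpace ℂ (Fin 2 × F)) := by
    ext x; simp
  show V' (WithLp.toLp 2 (fun w => (ψ₀ • a + ψ₁ • b) (w, p.2))) p.1 = _
  rw [h, map_add, map_smul, map_smul]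
  simp [actQF]

lemma tp_expand {F N : Type*} [Fintype F] [Fintype N]
    (ψ₀ ψ₁ : ℂ) (x0 x1 : EuclideanSpace ℂ (Fin 2)) (y : EuclideanSpace ℂ F)
    (w : EuclideanSpace ℂ N) :
    tpQFN (tpQF' (ψ₀ • x0 + ψ₁ • x1) y) w
      = ψ₀ • tpQFN (tpQF' x0 y) w + ψ₁ • tpQFN (tpQF' x1 y) w := by
  ext p
  simp [tpQFN, tpQF']
  ring

lemma tensor_factor {F N : Type*} [Fintype F] [Fintype N]
    (v u : EuclideanSpace ℂ (Fin 2 × F)) (n m : EuclideanSpace ℂ N)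
    (h : tpQFN v n = tpQFN u m) (p : Fin 2 × F) (hu : u p ≠ 0) :
    m = (v p / u p) • n := by
  ext x
  have hx : tpQFN v n (p, x) = tpQFN u m (p, x) := by rw [h]
  simp only [tpQFN, PiLp.toLp_apply] at hx
  simp only [PiLp.smul_apply, smul_eq_mul]
  field_simp
  linear_combination -hx

lemma ne_zero_of_norm_one {ι : Type*} [Fintype ι] (v : EuclideanSpace ℂ ι)
    (hv : ‖v‖ = 1) : ∃ i, v i ≠ 0 := by
  by_contra hc
  push_neg at hc
  have : v = 0 := by ext i; exact hc i
  rw [this] at hv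
  simp at hv

/-- against Deutsch's "I knew 0 or 1" record.  If a reversal acting only
on `Q ⊗ F` returns `Q ⊗ F` to the original product state for every genuine
superposition, while leaving the notepad `N` in some fixed state, then the notepad
states `|n₀⟩`, `|n₁⟩` must coincide up to a global phase. -/
theorem notepad_record_trivial {F N : Type*} [Fintype F] [Fintype N]
    (U : EuclideanSpace ℂ ((Fin 2 × F) × N) ≃ₗᵢ[ℂ] EuclideanSpace ℂ ((Fin 2 × F) × N))
    (V' : EuclideanSpace ℂ (Fin 2 × F) ≃ₗᵢ[ℂ] EuclideanSpace ℂ (Fin 2 × F))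
    (r : EuclideanSpace ℂ F) (fv : Fin 2 → EuclideanSpace ℂ F)
    (nv : Fin 2 → EuclideanSpace ℂ N) (blank : EuclideanSpace ℂ N)
    (hr : ‖r‖ = 1) (hf : ∀ q, ‖fv q‖ = 1) (hn : ∀ q, ‖nv q‖ = 1) (hbl : ‖blank‖ = 1)
    -- the observation: U(|q⟩ ⊗ |r⟩ ⊗ |blank⟩) = |q⟩ ⊗ |f_q⟩ ⊗ |n_q⟩
    (hU : ∀ q, U (tpQFN (tpQF' (qbv' q) r) blank) = tpQFN (tpQF' (qbv' q) (fv q)) (nv q))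
    -- the reversal V' ⊗ I_N returns Q ⊗ F to the product state for all ψ₀ψ₁ ≠ 0,
    -- leaving N in some fixed state nfix
    (nfix : EuclideanSpace ℂ N)
    (hrev : ∀ ψ₀ ψ₁ : ℂ, ψ₀ ≠ 0 → ψ₁ ≠ 0 →
      actQF V' (U (tpQFN (tpQF' (ψ₀ • qbv' 0 + ψ₁ • qbv' 1) r) blank))
        = tpQFN (tpQF' (ψ₀ • qbv' 0 + ψ₁ • qbv' 1) r) nfix) :
    ∃ c : ℂ, ‖c‖ = 1 ∧ nv 1 = c • nv 0 := by
  set v0 : EuclideanSpace ℂ (Fin 2 × F) := V' (tpQF' (qbv' 0) (fv 0)) with hv0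
  set v1 : EuclideanSpace ℂ (Fin 2 × F) := V' (tpQF' (qbv' 1) (fv 1)) with hv1
  set A := tpQFN v0 (nv 0) with hA
  set B := tpQFN v1 (nv 1) with hBdef
  set C0 := tpQFN (tpQF' (qbv' 0) r) nfix with hC0
  set C1 := tpQFN (tpQF' (qbv' 1) r) nfix with hC1
  have key : ∀ ψ₀ ψ₁ : ℂ, ψ₀ ≠ 0 → ψ₁ ≠ 0 →
      ψ₀ • A + ψ₁ • B = ψ₀ • C0 + ψ₁ • C1 := by
    intro ψ₀ ψ₁ h0 h1
    have h := hrev ψ₀ ψ₁ h0 h1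
    rw [tp_expand, map_add, map_smul, map_smul, hU 0, hU 1, actQF_lin,
      actQF_tp, actQF_tp, tp_expand] at h
    exact h
  have e1 := key 1 1 one_ne_zero one_ne_zero
  have e2 := key 1 2 one_ne_zero two_ne_zero
  have hB : B = C1 := by
    calc B = ((1:ℂ) • A + (2:ℂ) • B) - ((1:ℂ) • A + (1:ℂ) • B) := by module
    _ = ((1:ℂ) • C0 + (2:ℂ) • C1) - ((1:ℂ) • C0 + (1:ℂ) • C1) := by rw [e1, e2]
    _ = C1 := by module
  have hA' : A = C0 := by
    calc A = ((1:ℂ) • A + (1:ℂ) • B) - (1:ℂ) • B := by module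
    _ = ((1:ℂ) • C0 + (1:ℂ) • C1) - (1:ℂ) • C1 := by rw [e1, hB]
    _ = C0 := by module
  -- a coordinate where r is nonzero
  obtain ⟨f, hf0⟩ := ne_zero_of_norm_one r hr
  have hu1 : tpQF' (qbv' 1) r (1, f) ≠ 0 := by
    simp [tpQF', qbv', EuclideanSpace.single_apply, hf0]
  have hu0 : tpQF' (qbv' 0) r (0, f) ≠ 0 := by
    simp [tpQF', qbv', EuclideanSpace.single_apply, hf0]
  have h1 : nfix = (v1 (1, f) / tpQF' (qbv' 1) r (1, f)) • nv 1 :=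
    tensor_factor v1 (tpQF' (qbv' 1) r) (nv 1) nfix hB (1, f) hu1
  have h0 : nfix = (v0 (0, f) / tpQF' (qbv' 0) r (0, f)) • nv 0 :=
    tensor_factor v0 (tpQF' (qbv' 0) r) (nv 0) nfix hA' (0, f) hu0
  set c1 := v1 (1, f) / tpQF' (qbv' 1) r (1, f) with hc1
  set c0 := v0 (0, f) / tpQF' (qbv' 0) r (0, f) with hc0
  have hc1ne : c1 ≠ 0 := by
    intro hz
    rw [hz, zero_smul] at h1
    -- then B = tpQFN _ 0 = 0, contradicting nonzeroness of B
    have hBzero : B = 0 := by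
      rw [hB, hC1, h1]
      ext p
      simp [tpQFN]
    -- v1 ≠ 0 since V' injective and tpQF' (qbv' 1) (fv 1) ≠ 0
    obtain ⟨g, hg⟩ := ne_zero_of_norm_one (fv 1) (hf 1)
    have htpne : tpQF' (qbv' 1) (fv 1) ≠ 0 := by
      intro hz
      have h2 : tpQF' (qbv' 1) (fv 1) ((1 : Fin 2), g) = 0 := by rw [hz]; rfl
      simp [tpQF', qbv', EuclideanSpace.single_apply] at h2
      exact hg h2
    have hv1ne : v1 ≠ 0 := by
      rw [hv1]; intro hz
      exact htpne (V'.injective (by rw [hz, map_zero]))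
    obtain ⟨p, hvne⟩ : ∃ p, v1 p ≠ 0 := by
      by_contra hc; push_neg at hc; exact hv1ne (by ext i; exact hc i)
    obtain ⟨x, hx⟩ := ne_zero_of_norm_one (nv 1) (hn 1)
    have : B (p, x) = 0 := by rw [hBzero]; rfl
    rw [hBdef] at this
    simp only [tpQFN, PiLp.toLp_apply] at this
    exact (mul_ne_zero hvne hx) this
  have hmain : nv 1 = (c1⁻¹ * c0) • nv 0 := by
    rw [mul_smul, ← h0, h1, ← mul_smul, inv_mul_cancel₀ hc1ne, one_smul]
  refine ⟨c1⁻¹ * c0, ?_, hmain⟩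
  have := congrArg norm hmain
  rw [norm_smul, hn 1, hn 0, mul_one] at this
  exact this.symm
end

section
/- The set of correlations $\wp(a,b|x,y)$ ($a,b \in \{\pm 1\}$, $x,y \in \{1,2\}$) admitting an LF model is a convex polytope: it is closed under convex combinations, and it is the convex hull of finitely many extreme points. -/
/-- The Local Friendliness model of Eq. (1), for a behaviour regarded as a point of the
real vector space `(Fin 2 × Fin 2 × Fin 2 × Fin 2) → ℝ` (coordinates `(a,b,x,y)`):
`x = 0` encodes the paper's setting `1` and `x = 1` encodes setting `2`. -/
def LFModelPt (w : (Fin 2 × Fin 2 × Fin 2 × Fin 2) → ℝ) : Prop :=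
  ∃ (Pc : Fin 2 → ℝ) (PB : Fin 2 → Fin 2 → Fin 2 → ℝ)
    (Pab : Fin 2 → Fin 2 → Fin 2 → Fin 2 → ℝ),
    (∀ c, 0 ≤ Pc c) ∧ (∑ c, Pc c = 1) ∧
    (∀ b c y, 0 ≤ PB b c y) ∧ (∀ c y, ∑ b, PB b c y = 1) ∧
    (∀ a b c y, 0 ≤ Pab a b c y) ∧ (∀ c y, ∑ a, ∑ b, Pab a b c y = 1) ∧
    (∀ a c, ∑ b, Pab a b c 0 = ∑ b, Pab a b c 1) ∧
    (∀ a b y, w (a, b, 0, y) = ∑ c, (if a = c then (1:ℝ) else 0) * PB b c y * Pc c) ∧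
    (∀ a b y, w (a, b, 1, y) = ∑ c, Pab a b c y * Pc c)

def LFgood (w : (Fin 2 × Fin 2 × Fin 2 × Fin 2) → ℝ) : Prop :=
  (∀ i, 0 ≤ w i) ∧
  (∀ x y : Fin 2, ∑ a, ∑ b, w (a, b, x, y) = 1) ∧
  (∀ a x : Fin 2, ∑ b, w (a, b, x, 0) = ∑ b, w (a, b, x, 1))

theorem lf_iff (w : (Fin 2 × Fin 2 × Fin 2 × Fin 2) → ℝ) : LFModelPt w ↔ LFgood w := by
  constructor
  · rintro ⟨Pc, PB, Pab, hPc0, hPc1, hPB0, hPB1, hPab0, hPab1, hNS, hw0, hw1⟩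
    simp only [Fin.sum_univ_two] at hPc1
    have hb : ∀ c y, PB 0 c y + PB 1 c y = 1 := by
      intro c y; have := hPB1 c y; simpa [Fin.sum_univ_two] using this
    have hq : ∀ c y, Pab 0 0 c y + Pab 0 1 c y + (Pab 1 0 c y + Pab 1 1 c y) = 1 := by
      intro c y; have := hPab1 c y; simpa [Fin.sum_univ_two] using this
    have hn : ∀ a c, Pab a 0 c 0 + Pab a 1 c 0 = Pab a 0 c 1 + Pab a 1 c 1 := by
      intro a c; have := hNS a c; simpa [Fin.sum_univ_two] using this
    have pos0 : ∀ a b y, 0 ≤ w (a, b, 0, y) := by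
      intro a b y
      rw [hw0]
      refine Finset.sum_nonneg fun c _ => mul_nonneg (mul_nonneg ?_ (hPB0 b c y)) (hPc0 c)
      split_ifs <;> norm_num
    have pos1 : ∀ a b y, 0 ≤ w (a, b, 1, y) := fun a b y => by
      rw [hw1]
      exact Finset.sum_nonneg fun c _ => mul_nonneg (hPab0 a b c y) (hPc0 c)
    have norm0 : ∀ y, ∑ a, ∑ b, w (a, b, 0, y) = 1 := by
      intro y
      simp only [hw0, Fin.sum_univ_two]
      norm_num
      linear_combination Pc 0 * hb 0 y + Pc 1 * hb 1 y + hPc1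
    have norm1 : ∀ y, ∑ a, ∑ b, w (a, b, 1, y) = 1 := by
      intro y
      simp only [hw1, Fin.sum_univ_two]
      linear_combination Pc 0 * hq 0 y + Pc 1 * hq 1 y + hPc1
    have marg0 : ∀ a, ∑ b, w (a, b, 0, 0) = ∑ b, w (a, b, 0, 1) := by
      intro a
      simp only [hw0, Fin.sum_univ_two]
      linear_combination ((if a = 0 then (1:ℝ) else 0) * Pc 0) * (hb 0 0 - hb 0 1)
        + ((if a = 1 then (1:ℝ) else 0) * Pc 1) * (hb 1 0 - hb 1 1)
    have marg1 : ∀ a, ∑ b, w (a, b, 1, 0) = ∑ b, w (a, b, 1, 1) := by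
      intro a
      simp only [hw1, Fin.sum_univ_two]
      linear_combination Pc 0 * hn a 0 + Pc 1 * hn a 1
    refine ⟨?_, ?_, ?_⟩
    · rintro ⟨a, b, x, y⟩
      fin_cases x
      · exact pos0 a b y
      · exact pos1 a b y
    · intro x y
      fin_cases x
      · exact norm0 y
      · exact norm1 y
    · intro a x
      fin_cases x
      · exact marg0 a
      · exact marg1 a
  · rintro ⟨hpos, hnorm, hmarg⟩
    have hmarg' : ∀ a x : Fin 2, w (a, 0, x, 0) + w (a, 1, x, 0) = w (a, 0, x, 1) + w (a, 1, x, 1) := by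
      intro a x; have := hmarg a x; simpa [Fin.sum_univ_two] using this
    set Pc : Fin 2 → ℝ := fun c => w (c, 0, 0, 0) + w (c, 1, 0, 0) with hPcdef
    have hPcy : ∀ c y : Fin 2, w (c, 0, 0, y) + w (c, 1, 0, y) = Pc c := by
      intro c y; fin_cases y
      · rfl
      · exact (hmarg' c 0).symm
    have hPcnn : ∀ c, 0 ≤ Pc c := fun c => add_nonneg (hpos _) (hpos _)
    have hPcsum : Pc 0 + Pc 1 = 1 := by
      have h := hnorm 0 0
      simp only [Fin.sum_univ_two] at h
      simp only [hPcdef]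
      linarith
    have hwz : ∀ c b y, Pc c = 0 → w (c, b, 0, y) = 0 := by
      intro c b y h
      have h1 := hpos (c, 0, 0, y); have h2 := hpos (c, 1, 0, y)
      have h3 := hPcy c y
      rw [h] at h3
      have hz0 : w (c, 0, 0, y) = 0 := by linarith
      have hz1 : w (c, 1, 0, y) = 0 := by linarith
      fin_cases b
      · exact hz0
      · exact hz1
    refine ⟨Pc, fun b c y => if Pc c = 0 then (if b = 0 then 1 else 0) else w (c, b, 0, y) / Pc c,
      fun a b c y => w (a, b, 1, y), hPcnn, ?_, ?_, ?_, ?_, ?_, ?_, ?_, ?_⟩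
    · simpa [Fin.sum_univ_two] using hPcsum
    · intro b c y
      dsimp only
      split_ifs with h h2
      · norm_num
      · norm_num
      · exact div_nonneg (hpos _) (hPcnn c)
    · intro c y
      dsimp only
      by_cases h : Pc c = 0
      · simp [h, Fin.sum_univ_two]
      · simp only [h, if_false, Fin.sum_univ_two]
        rw [← add_div, hPcy c y, div_self h]
    · intro a b c y; exact hpos _
    · intro c y; exact hnorm 1 y
    · intro a c; exact hmarg a 1
    · intro a b y
      have key : ∀ (a : Fin 2), w (a, b, 0, y) =
          (if a = 0 then (1:ℝ) else 0) *
            (if Pc 0 = 0 then (if b = 0 then (1:ℝ) else 0) else w (0, b, 0, y) / Pc 0) * Pc 0 +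
          (if a = 1 then (1:ℝ) else 0) *
            (if Pc 1 = 0 then (if b = 0 then (1:ℝ) else 0) else w (1, b, 0, y) / Pc 1) * Pc 1 := by
        intro a
        fin_cases a
        · norm_num
          by_cases h : Pc 0 = 0
          · simp [h, hwz 0 b y h]
          · rw [if_neg h, div_mul_cancel₀ _ h]
        · norm_num
          by_cases h : Pc 1 = 0
          · simp [h, hwz 1 b y h]
          · rw [if_neg h, div_mul_cancel₀ _ h]
      simpa [Fin.sum_univ_two] using key a
    · intro a b y
      simp only [Fin.sum_univ_two]
      linear_combination (-(w (a, b, 1, y))) * hPcsum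

def evert (u : Fin 2 × Fin 2 × Fin 2) (a b y : Fin 2) : ℝ :=
  if a = u.1 ∧ b = (if y = 0 then u.2.1 else u.2.2) then 1 else 0

def dvert (u v : Fin 2 × Fin 2 × Fin 2) : (Fin 2 × Fin 2 × Fin 2 × Fin 2) → ℝ :=
  fun i => if i.2.2.1 = 0 then evert u i.1 i.2.1 i.2.2.2 else evert v i.1 i.2.1 i.2.2.2

lemma evert_nonneg (u : Fin 2 × Fin 2 × Fin 2) (a b y : Fin 2) : 0 ≤ evert u a b y := by
  unfold evert; split_ifs <;> norm_num

lemma evert_sum_b (u : Fin 2 × Fin 2 × Fin 2) (a y : Fin 2) :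
    evert u a 0 y + evert u a 1 y = if a = u.1 then 1 else 0 := by
  obtain ⟨c, b0, b1⟩ := u
  fin_cases c <;> fin_cases b0 <;> fin_cases b1 <;> fin_cases y <;> fin_cases a <;>
    simp [evert]

lemma evert_norm (u : Fin 2 × Fin 2 × Fin 2) (y : Fin 2) :
    evert u 0 0 y + evert u 0 1 y + (evert u 1 0 y + evert u 1 1 y) = 1 := by
  rw [evert_sum_b, evert_sum_b]
  obtain ⟨c, b0, b1⟩ := u
  fin_cases c <;> simp

lemma dvert_good (u v : Fin 2 × Fin 2 × Fin 2) : LFgood (dvert u v) := by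
  refine ⟨?_, ?_, ?_⟩
  · rintro ⟨a, b, x, y⟩
    unfold dvert
    dsimp only
    split_ifs <;> exact evert_nonneg _ _ _ _
  · intro x y
    have h0 : ∑ a, ∑ b, dvert u v (a, b, 0, y) = 1 := by
      simp only [Fin.sum_univ_two, dvert]
      norm_num
      exact evert_norm u y
    have h1 : ∑ a, ∑ b, dvert u v (a, b, 1, y) = 1 := by
      simp only [Fin.sum_univ_two, dvert]
      norm_num
      exact evert_norm v y
    fin_cases x
    · exact h0
    · exact h1
  · intro a x
    have h0 : ∑ b, dvert u v (a, b, 0, 0) = ∑ b, dvert u v (a, b, 0, 1) := by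
      simp only [Fin.sum_univ_two, dvert]
      norm_num
      rw [evert_sum_b, evert_sum_b]
    have h1 : ∑ b, dvert u v (a, b, 1, 0) = ∑ b, dvert u v (a, b, 1, 1) := by
      simp only [Fin.sum_univ_two, dvert]
      norm_num
      rw [evert_sum_b, evert_sum_b]
    fin_cases x
    · exact h0
    · exact h1

lemma good_convex : Convex ℝ {w : (Fin 2 × Fin 2 × Fin 2 × Fin 2) → ℝ | LFgood w} := by
  rintro p ⟨hp0, hp1, hp2⟩ q ⟨hq0, hq1, hq2⟩ s t hs ht hst
  refine ⟨?_, ?_, ?_⟩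
  · intro i
    simp only [Pi.add_apply, Pi.smul_apply, smul_eq_mul]
    exact add_nonneg (mul_nonneg hs (hp0 i)) (mul_nonneg ht (hq0 i))
  · intro x y
    have e1 := hp1 x y; have e2 := hq1 x y
    simp only [Fin.sum_univ_two, Pi.add_apply, Pi.smul_apply, smul_eq_mul] at *
    linear_combination s * e1 + t * e2 + hst
  · intro a x
    have e1 := hp2 a x; have e2 := hq2 a x
    simp only [Fin.sum_univ_two, Pi.add_apply, Pi.smul_apply, smul_eq_mul] at *
    linear_combination s * e1 + t * e2

noncomputable section
variable (w : (Fin 2 × Fin 2 × Fin 2 × Fin 2) → ℝ)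

def pm (x c : Fin 2) : ℝ := w (c, 0, x, 0) + w (c, 1, x, 0)
def rm (x c b y : Fin 2) : ℝ :=
  if pm w x c = 0 then (if b = 0 then 1 else 0) else w (c, b, x, y) / pm w x c
def gm (x : Fin 2) (u : Fin 2 × Fin 2 × Fin 2) : ℝ :=
  pm w x u.1 * rm w x u.1 u.2.1 0 * rm w x u.1 u.2.2 1

variable {w}

lemma sum_w_pm (hw : LFgood w) (x c y : Fin 2) :
    w (c, 0, x, y) + w (c, 1, x, y) = pm w x c := by
  have h := hw.2.2 c x
  simp only [Fin.sum_univ_two] at h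
  have h0 : w (c, 0, x, 0) + w (c, 1, x, 0) = pm w x c := rfl
  have h1 : w (c, 0, x, 1) + w (c, 1, x, 1) = pm w x c := by rw [← h]; rfl
  fin_cases y
  · exact h0
  · exact h1

lemma pm_nonneg (hw : LFgood w) (x c : Fin 2) : 0 ≤ pm w x c :=
  add_nonneg (hw.1 _) (hw.1 _)

lemma pm_sum (hw : LFgood w) (x : Fin 2) : pm w x 0 + pm w x 1 = 1 := by
  have h := hw.2.1 x 0
  simp only [Fin.sum_univ_two] at h
  unfold pm
  linarith

lemma rm_nonneg (hw : LFgood w) (x c b y : Fin 2) : 0 ≤ rm w x c b y := by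
  unfold rm
  split_ifs with h h2
  · norm_num
  · norm_num
  · exact div_nonneg (hw.1 _) (pm_nonneg hw x c)

lemma rm_sum (hw : LFgood w) (x c y : Fin 2) : rm w x c 0 y + rm w x c 1 y = 1 := by
  unfold rm
  by_cases h : pm w x c = 0
  · simp [h]
  · simp only [h, if_false]
    rw [← add_div, sum_w_pm hw x c y, div_self h]

lemma w_eq_pm_rm (hw : LFgood w) (c b x y : Fin 2) :
    w (c, b, x, y) = pm w x c * rm w x c b y := by
  by_cases h : pm w x c = 0
  · have h1 := hw.1 (c, 0, x, y); have h2 := hw.1 (c, 1, x, y)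
    have h3 := sum_w_pm hw x c y
    rw [h] at h3
    have hz0 : w (c, 0, x, y) = 0 := by linarith
    have hz1 : w (c, 1, x, y) = 0 := by linarith
    have : w (c, b, x, y) = 0 := by
      fin_cases b
      · exact hz0
      · exact hz1
    rw [this, h, zero_mul]
  · unfold rm
    rw [if_neg h, mul_div_cancel₀ _ h]

lemma gm_nonneg (hw : LFgood w) (x : Fin 2) (u : Fin 2 × Fin 2 × Fin 2) : 0 ≤ gm w x u :=
  mul_nonneg (mul_nonneg (pm_nonneg hw x _) (rm_nonneg hw _ _ _ _)) (rm_nonneg hw _ _ _ _)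

lemma gm_sum (hw : LFgood w) (x : Fin 2) : ∑ u, gm w x u = 1 := by
  have hr := rm_sum hw
  have hp := pm_sum hw x
  simp only [Fintype.sum_prod_type, Fin.sum_univ_two, gm]
  linear_combination (pm w x 0 * (rm w x 0 0 1 + rm w x 0 1 1)) * hr x 0 0
    + pm w x 0 * hr x 0 1
    + (pm w x 1 * (rm w x 1 0 1 + rm w x 1 1 1)) * hr x 1 0
    + pm w x 1 * hr x 1 1 + hp

lemma gm_evert (hw : LFgood w) (x a b y : Fin 2) :
    ∑ u, gm w x u * evert u a b y = w (a, b, x, y) := by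
  have hr := rm_sum hw
  have hweq := w_eq_pm_rm hw
  fin_cases a <;> fin_cases b <;> fin_cases y <;>
    simp only [Fintype.sum_prod_type, Fin.sum_univ_two, gm, evert, Fin.zero_eta, Fin.mk_one] <;>
    norm_num
  · rw [hweq]; linear_combination (pm w x 0 * rm w x 0 0 0) * hr x 0 1
  · rw [hweq]; linear_combination (pm w x 0 * rm w x 0 0 1) * hr x 0 0
  · rw [hweq]; linear_combination (pm w x 0 * rm w x 0 1 0) * hr x 0 1
  · rw [hweq]; linear_combination (pm w x 0 * rm w x 0 1 1) * hr x 0 0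
  · rw [hweq]; linear_combination (pm w x 1 * rm w x 1 0 0) * hr x 1 1
  · rw [hweq]; linear_combination (pm w x 1 * rm w x 1 0 1) * hr x 1 0
  · rw [hweq]; linear_combination (pm w x 1 * rm w x 1 1 0) * hr x 1 1
  · rw [hweq]; linear_combination (pm w x 1 * rm w x 1 1 1) * hr x 1 0

lemma mu_dvert (hw : LFgood w) (x a b y : Fin 2) :
    ∑ uv : (Fin 2 × Fin 2 × Fin 2) × (Fin 2 × Fin 2 × Fin 2),
      (gm w 0 uv.1 * gm w 1 uv.2) * dvert uv.1 uv.2 (a, b, x, y) = w (a, b, x, y) := by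
  have h0 : ∑ uv : (Fin 2 × Fin 2 × Fin 2) × (Fin 2 × Fin 2 × Fin 2),
      (gm w 0 uv.1 * gm w 1 uv.2) * dvert uv.1 uv.2 (a, b, 0, y) = w (a, b, 0, y) := by
    have hd : ∀ u v : Fin 2 × Fin 2 × Fin 2, dvert u v (a, b, 0, y) = evert u a b y := by
      intro u v; simp [dvert]
    simp only [hd]
    rw [Fintype.sum_prod_type]
    have step : ∀ u : Fin 2 × Fin 2 × Fin 2,
        ∑ v, gm w 0 u * gm w 1 v * evert u a b y = gm w 0 u * evert u a b y := by
      intro u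
      calc ∑ v, gm w 0 u * gm w 1 v * evert u a b y
          = ∑ v, (gm w 0 u * evert u a b y) * gm w 1 v :=
            Finset.sum_congr rfl fun v _ => by ring
        _ = (gm w 0 u * evert u a b y) * ∑ v, gm w 1 v := (Finset.mul_sum _ _ _).symm
        _ = gm w 0 u * evert u a b y := by rw [gm_sum hw 1, mul_one]
    rw [Finset.sum_congr rfl fun u _ => step u]
    exact gm_evert hw 0 a b y
  have h1 : ∑ uv : (Fin 2 × Fin 2 × Fin 2) × (Fin 2 × Fin 2 × Fin 2),
      (gm w 0 uv.1 * gm w 1 uv.2) * dvert uv.1 uv.2 (a, b, 1, y) = w (a, b, 1, y) := by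
    have hd : ∀ u v : Fin 2 × Fin 2 × Fin 2, dvert u v (a, b, 1, y) = evert v a b y := by
      intro u v; simp [dvert]
    simp only [hd]
    rw [Fintype.sum_prod_type]
    have step : ∀ u : Fin 2 × Fin 2 × Fin 2,
        ∑ v, gm w 0 u * gm w 1 v * evert v a b y = gm w 0 u * w (a, b, 1, y) := by
      intro u
      calc ∑ v, gm w 0 u * gm w 1 v * evert v a b y
          = ∑ v, gm w 0 u * (gm w 1 v * evert v a b y) :=
            Finset.sum_congr rfl fun v _ => by ring
        _ = gm w 0 u * ∑ v, gm w 1 v * evert v a b y := (Finset.mul_sum _ _ _).symm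
        _ = gm w 0 u * w (a, b, 1, y) := by rw [gm_evert hw 1 a b y]
    rw [Finset.sum_congr rfl fun u _ => step u, ← Finset.sum_mul, gm_sum hw 0, one_mul]
  fin_cases x
  · exact h0
  · exact h1

end

/-- the set of correlations admitting an LF model is a convex polytope:
it is convex, and it is the convex hull of finitely many extreme points. -/
theorem lf_set_is_polytope :
    Convex ℝ {w : (Fin 2 × Fin 2 × Fin 2 × Fin 2) → ℝ | LFModelPt w} ∧
    ∃ S : Finset ((Fin 2 × Fin 2 × Fin 2 × Fin 2) → ℝ),
      {w : (Fin 2 × Fin 2 × Fin 2 × Fin 2) → ℝ | LFModelPt w} = convexHull ℝ (S : Set _) := by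
  have hset : {w : (Fin 2 × Fin 2 × Fin 2 × Fin 2) → ℝ | LFModelPt w}
      = {w : (Fin 2 × Fin 2 × Fin 2 × Fin 2) → ℝ | LFgood w} := Set.ext lf_iff
  constructor
  · rw [hset]; exact good_convex
  · refine ⟨Finset.image
      (fun uv : (Fin 2 × Fin 2 × Fin 2) × (Fin 2 × Fin 2 × Fin 2) => dvert uv.1 uv.2)
      Finset.univ, ?_⟩
    rw [hset]
    apply Set.Subset.antisymm
    · intro w hw
      set μ : (Fin 2 × Fin 2 × Fin 2) × (Fin 2 × Fin 2 × Fin 2) → ℝ :=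
        fun uv => gm w 0 uv.1 * gm w 1 uv.2 with hμdef
      have hμ1 : ∑ uv, μ uv = 1 := by
        have hstep : ∀ u : Fin 2 × Fin 2 × Fin 2, ∑ v, μ (u, v) = gm w 0 u := by
          intro u
          rw [hμdef]
          calc ∑ v, gm w 0 u * gm w 1 v
              = gm w 0 u * ∑ v, gm w 1 v := (Finset.mul_sum _ _ _).symm
            _ = gm w 0 u := by rw [gm_sum hw 1, mul_one]
        rw [Fintype.sum_prod_type, Finset.sum_congr rfl fun u _ => hstep u]
        exact gm_sum hw 0
      have hmem := Finset.centerMass_mem_convexHull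
        (t := (Finset.univ : Finset ((Fin 2 × Fin 2 × Fin 2) × (Fin 2 × Fin 2 × Fin 2))))
        (w := μ)
        (z := fun uv => dvert uv.1 uv.2)
        (fun i _ => mul_nonneg (gm_nonneg hw 0 _) (gm_nonneg hw 1 _))
        (by rw [hμ1]; norm_num)
        (fun i _ => Finset.mem_coe.2 (Finset.mem_image_of_mem _ (Finset.mem_univ i)))
      have hcm : Finset.univ.centerMass μ (fun uv => dvert uv.1 uv.2) = w := by
        rw [Finset.centerMass_eq_of_sum_1 _ _ hμ1]
        funext i
        obtain ⟨a, b, x, y⟩ := i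
        rw [Finset.sum_apply]
        simp only [Pi.smul_apply, smul_eq_mul]
        exact mu_dvert hw x a b y
      rw [← hcm]
      exact hmem
    · exact convexHull_min
        (by
          rintro z hz
          simp only [Finset.coe_image, Finset.coe_univ, Set.image_univ, Set.mem_range] at hz
          obtain ⟨uv, rfl⟩ := hz
          exact dvert_good uv.1 uv.2)
        good_convex
end
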